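/- Let u ∈ C_{+,log} be (log,exp)-convex, meaning x ↦ log u(e^x) is convex on ℝ. Then u(r) = sup_{t≥0} ℓ_u(t) r^t for all r ≥ 0, where ℓ_u(t) = inf_{s>0} u(s)/s^t. -/

import Mathlib

open Real Filter Topology

noncomputable def ell (u : ℝ → ℝ) (t : ℝ) : ℝ :=
  ⨅ r : {r : ℝ // 0 < r}, u r / (r : ℝ) ^ t

theorem legendre_inversion (u : ℝ → ℝ)
    (hpos : ∀ r ≥ 0, 0 < u r)
    (hcont : ContinuousOn u (Set.Ici 0))
    (hlim : Filter.Tendsto (fun r => Real.log (u r) / Real.log r)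
      Filter.atTop Filter.atTop)
    (hconv : ConvexOn ℝ Set.univ (fun x : ℝ => Real.log (u (Real.exp x)))) :
    ∀ r ≥ (0 : ℝ), u r = ⨆ t : {t : ℝ // 0 ≤ t}, ell u t * r ^ (t : ℝ) := by
  set f : ℝ → ℝ := fun x => Real.log (u (Real.exp x)) with hfdef
  -- u (exp x) = exp (f x)
  have hue : ∀ x : ℝ, u (Real.exp x) = Real.exp (f x) := fun x =>
    (Real.exp_log (hpos _ (Real.exp_pos x).le)).symm
  have hus : ∀ s : ℝ, 0 < s → u s = Real.exp (f (Real.log s)) := by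
    intro s hs
    have := hue (Real.log s)
    rwa [Real.exp_log hs] at this
  -- f tends to log (u 0) at -∞
  have hfbot : Tendsto f atBot (𝓝 (Real.log (u 0))) := by
    have h1 : Tendsto Real.exp atBot (𝓝[Set.Ici 0] 0) :=
      tendsto_nhdsWithin_of_tendsto_nhds_of_eventually_within _ Real.tendsto_exp_atBot
        (Eventually.of_forall fun x => (Real.exp_pos x).le)
    have h2 : Tendsto (fun x => u (Real.exp x)) atBot (𝓝 (u 0)) :=
      (hcont 0 Set.self_mem_Ici).tendsto.comp h1
    exact (Real.continuousAt_log (hpos 0 le_rfl).ne').tendsto.comp h2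
  -- f is monotone
  have hmono : Monotone f := by
    intro a b hab
    rcases eq_or_lt_of_le hab with rfl | hab; · exact le_rfl
    by_contra hba
    push_neg at hba
    set s := (f b - f a) / (b - a) with hs
    have hslt : s < 0 := div_neg_of_neg_of_pos (by linarith) (by linarith)
    have key : ∀ x < a, f a + s * (x - a) ≤ f x := by
      intro x hx
      have := hconv.slope_mono_adjacent (Set.mem_univ x) (Set.mem_univ b) hx hab
      have hax : 0 < a - x := by linarith
      have : f a - f x ≤ s * (a - x) := by
        rw [div_le_div_iff₀ hax (by linarith : (0:ℝ) < b - a)] at this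
        rw [hs, div_mul_eq_mul_div, le_div_iff₀ (by linarith : (0:ℝ) < b - a)]
        linarith [this]
      nlinarith
    have htop : Tendsto f atBot atTop := by
      apply tendsto_atTop_mono' _ (_ : ∀ᶠ x in atBot, f a + s * (x - a) ≤ f x)
      · have : Tendsto (fun x : ℝ => s * (x - a)) atBot atTop := by
          apply Tendsto.const_mul_atBot_of_neg hslt
          exact tendsto_atBot_add_const_right _ _ tendsto_id
        exact tendsto_atTop_add_const_left _ _ this
      · filter_upwards [eventually_lt_atBot a] with x hx using key x hx
    exact not_tendsto_atTop_of_tendsto_nhds hfbot htop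
  -- f is continuous
  have hfc : Continuous f := by
    rw [continuous_iff_continuousAt]
    intro x
    have h1 : ContinuousAt u (Real.exp x) :=
      hcont.continuousAt (Ici_mem_nhds (Real.exp_pos x))
    exact ContinuousAt.log (h1.comp Real.continuous_exp.continuousAt)
      (hpos _ (Real.exp_pos x).le).ne'
  -- u 0 ≤ u s for s > 0
  have hu0le : ∀ s : ℝ, 0 < s → u 0 ≤ u s := by
    intro s hs
    have hLx : Real.log (u 0) ≤ f (Real.log s) :=
      le_of_tendsto hfbot ((eventually_le_atBot (Real.log s)).mono fun y hy => hmono hy)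
    calc u 0 = Real.exp (Real.log (u 0)) := (Real.exp_log (hpos 0 le_rfl)).symm
      _ ≤ Real.exp (f (Real.log s)) := Real.exp_le_exp.2 hLx
      _ = u s := (hus s hs).symm
  have hbddB : ∀ t : ℝ, BddBelow (Set.range fun r : {r : ℝ // 0 < r} => u r / (r : ℝ) ^ t) := by
    intro t
    refine ⟨0, fun y hy => ?_⟩
    obtain ⟨r, rfl⟩ := hy
    exact div_nonneg (hpos _ r.2.le).le (Real.rpow_nonneg r.2.le _)
  have hellnn : ∀ t : ℝ, 0 ≤ ell u t := by
    intro t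
    exact le_ciInf fun r => div_nonneg (hpos _ r.2.le).le (Real.rpow_nonneg r.2.le _)
  -- each term is ≤ u r
  have hterm : ∀ t : ℝ, 0 ≤ t → ∀ r : ℝ, 0 ≤ r → ell u t * r ^ t ≤ u r := by
    intro t ht r hr
    rcases eq_or_lt_of_le hr with rfl | hr
    · rcases eq_or_lt_of_le ht with rfl | ht
      · rw [Real.rpow_zero, mul_one]
        have h1 : Tendsto u (𝓝[>] (0:ℝ)) (𝓝 (u 0)) :=
          ((hcont 0 Set.self_mem_Ici).tendsto).mono_left
            (nhdsWithin_mono 0 Set.Ioi_subset_Ici_self)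
        refine ge_of_tendsto h1 ?_
        filter_upwards [self_mem_nhdsWithin] with s hs
        have h2 : ell u 0 ≤ u s / (s:ℝ) ^ (0:ℝ) := ciInf_le (hbddB 0) ⟨s, hs⟩
        rwa [Real.rpow_zero, div_one] at h2
      · rw [Real.zero_rpow ht.ne', mul_zero]
        exact (hpos 0 le_rfl).le
    · have h1 : ell u t ≤ u r / r ^ t := ciInf_le (hbddB t) ⟨r, hr⟩
      have h2 : (0:ℝ) < r ^ t := Real.rpow_pos_of_pos hr t
      calc ell u t * r ^ t ≤ (u r / r ^ t) * r ^ t := by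
            exact mul_le_mul_of_nonneg_right h1 h2.le
        _ = u r := div_mul_cancel₀ _ h2.ne'
  intro r hr
  haveI : Nonempty {t : ℝ // 0 ≤ t} := ⟨⟨0, le_rfl⟩⟩
  have hbddA : BddAbove (Set.range fun t : {t : ℝ // 0 ≤ t} => ell u t * r ^ (t : ℝ)) := by
    refine ⟨u r, fun y hy => ?_⟩
    obtain ⟨t, rfl⟩ := hy
    exact hterm t t.2 r hr
  refine le_antisymm ?_ (ciSup_le fun t => hterm t t.2 r hr)
  -- lower bound
  rcases eq_or_lt_of_le hr with rfl | hr
  · have h0 : u 0 ≤ ell u 0 :=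
      le_ciInf fun s => by
        simpa [Real.rpow_zero] using hu0le s s.2
    have := le_ciSup hbddA ⟨0, le_rfl⟩
    simp only [Real.rpow_zero, mul_one] at this ⊢
    exact h0.trans this
  · set x0 := Real.log r with hx0
    have hrex : Real.exp x0 = r := Real.exp_log hr
    have hS : ∀ ε : ℝ, 0 < ε →
        u r * Real.exp (-(f (x0 + ε) - f x0)) ≤
          ⨆ t : {t : ℝ // 0 ≤ t}, ell u t * r ^ (t : ℝ) := by
      intro ε hε
      set t := (f (x0 + ε) - f x0) / ε with htdef
      have hδ : f (x0 + ε) - f x0 = t * ε := by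
        rw [htdef, div_mul_cancel₀ _ hε.ne']
      have ht : 0 ≤ t :=
        div_nonneg (sub_nonneg.2 (hmono (by linarith))) hε.le
      have hδnn : 0 ≤ f (x0 + ε) - f x0 := sub_nonneg.2 (hmono (by linarith))
      -- key inequality: ∀ x, f x0 - t * x0 - (t*ε) ≤ f x - t * x
      have hkey : ∀ x : ℝ, f x0 - t * x0 - t * ε ≤ f x - t * x := by
        intro x
        rcases lt_trichotomy x x0 with hx | rfl | hx
        · have := hconv.slope_mono_adjacent (Set.mem_univ x) (Set.mem_univ (x0 + ε))
            hx (by linarith)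
          have e : x0 + ε - x0 = ε := by ring
          rw [e, ← htdef] at this
          have h1 : (f x0 - f x) / (x0 - x) ≤ t := this
          have h2 : f x0 - f x ≤ t * (x0 - x) := by
            rw [div_le_iff₀ (by linarith : (0:ℝ) < x0 - x)] at h1
            linarith
          nlinarith
        · nlinarith
        · rcases le_or_gt x (x0 + ε) with hxe | hxe
          · have h1 : f x0 ≤ f x := hmono hx.le
            nlinarith
          · have := hconv.slope_mono_adjacent (Set.mem_univ x0) (Set.mem_univ x)
              (by linarith : x0 < x0 + ε) hxe
            have e : x0 + ε - x0 = ε := by ring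
            rw [e, ← htdef] at this
            have h1 : t ≤ (f x - f (x0 + ε)) / (x - (x0 + ε)) := this
            have h2 : t * (x - (x0 + ε)) ≤ f x - f (x0 + ε) := by
              rw [le_div_iff₀ (by linarith : (0:ℝ) < x - (x0 + ε))] at h1
              linarith
            nlinarith
      have hell : Real.exp (f x0 - t * x0 - t * ε) ≤ ell u t := by
        refine le_ciInf fun p => ?_
        have hp := p.2
        have h1 : u p / (p : ℝ) ^ t = Real.exp (f (Real.log p) - t * Real.log p) := by
          rw [hus p hp, Real.rpow_def_of_pos hp, ← Real.exp_sub]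
          ring_nf
        rw [h1]
        exact Real.exp_le_exp.2 (by simpa [mul_comm] using hkey (Real.log p))
      have hrt : r ^ t = Real.exp (t * x0) := by
        rw [Real.rpow_def_of_pos hr, hx0, mul_comm]
      have h2 : u r * Real.exp (-(f (x0 + ε) - f x0)) ≤ ell u t * r ^ t := by
        rw [hrt]
        calc u r * Real.exp (-(f (x0 + ε) - f x0))
            = Real.exp (f x0 - t * x0 - t * ε) * Real.exp (t * x0) := by
              rw [← hrex, hue, ← Real.exp_add, ← Real.exp_add, hδ]; ring_nf
          _ ≤ ell u t * Real.exp (t * x0) :=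
              mul_le_mul_of_nonneg_right hell (Real.exp_pos _).le
      exact h2.trans (le_ciSup hbddA ⟨t, ht⟩)
    -- take the limit ε → 0⁺
    have hlimg : Tendsto (fun ε : ℝ => u r * Real.exp (-(f (x0 + ε) - f x0)))
        (𝓝[>] (0:ℝ)) (𝓝 (u r)) := by
      have h1 : Tendsto (fun ε : ℝ => f (x0 + ε)) (𝓝[>] (0:ℝ)) (𝓝 (f x0)) := by
        have h2 : Tendsto (fun ε : ℝ => x0 + ε) (𝓝[>] (0:ℝ)) (𝓝 x0) := by
          have h2' : Tendsto (fun ε : ℝ => x0 + ε) (𝓝 (0:ℝ)) (𝓝 (x0 + 0)) :=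
            tendsto_const_nhds.add tendsto_id
          simpa using h2'.mono_left nhdsWithin_le_nhds
        exact (hfc.tendsto x0).comp h2
      have h3 : Tendsto (fun ε : ℝ => Real.exp (-(f (x0 + ε) - f x0)))
          (𝓝[>] (0:ℝ)) (𝓝 1) := by
        have : Tendsto (fun ε : ℝ => -(f (x0 + ε) - f x0)) (𝓝[>] (0:ℝ)) (𝓝 0) := by
          have := (h1.sub_const (f x0)).neg
          simpa using this
        simpa [Function.comp_def] using (Real.continuous_exp.tendsto 0).comp this
      have := (tendsto_const_nhds (x := u r) (f := 𝓝[>] (0:ℝ))).mul h3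
      simpa using this
    exact le_of_tendsto hlimg
      (eventually_nhdsWithin_of_forall fun ε hε => hS ε hε)
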